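/- For the difference case of the io-disjoint-to-FO translation, the translated formula is executable: if φ₁ is I(α₁)-executable with FV(φ₁) = I(α₁) ∪ O(α₁), φ₂ is I(α₂)-executable with FV(φ₂) = I(α₂) ∪ O(α₂), O(α₁) ⊆ O(α₂), and I(αᵢ) ∩ O(αᵢ) = ∅ for i=1,2, then φ₁ ∧ ¬φ₂ is V-executable for V = I(α₁) ∪ I(α₂) ∪ (O(α₂) \ O(α₁)). In particular FV(φ₂) ⊆ V ∪ FV(φ₁). -/
import Mathlib


/-- First-order formulas over relation names `ρ` (with access patterns),
variables `V`, and constants from `D`. -/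
inductive FO (ρ V D : Type) : Type
  | eqVar (x y : V)
  | eqConst (x : V) (c : D)
  | rel (R : ρ) (xs ys : List V)
  | not (φ : FO ρ V D)
  | and (φ ψ : FO ρ V D)
  | or (φ ψ : FO ρ V D)
  | ex (x : V) (φ : FO ρ V D)

namespace FO

variable {ρ V D : Type}

/-- Natural semantics: variables range over all of `D`. -/
def Sat (I : ρ → Set (List D)) [DecidableEq V] : FO ρ V D → (V → D) → Prop
  | eqVar x y, ν => ν x = ν y
  | eqConst x c, ν => ν x = c
  | rel R xs ys, ν => (xs.map ν ++ ys.map ν) ∈ I R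
  | not φ, ν => ¬ Sat I φ ν
  | and φ ψ, ν => Sat I φ ν ∧ Sat I ψ ν
  | or φ ψ, ν => Sat I φ ν ∨ Sat I ψ ν
  | ex x φ, ν => ∃ d : D, Sat I φ (Function.update ν x d)

variable [DecidableEq V]

/-- Free variables of a formula. -/
def FV : FO ρ V D → Finset V
  | eqVar x y => {x, y}
  | eqConst x _ => {x}
  | rel _ xs ys => xs.toFinset ∪ ys.toFinset
  | not φ => FV φ
  | and φ ψ => FV φ ∪ FV ψ
  | or φ ψ => FV φ ∪ FV ψ
  | ex x φ => FV φ \ {x}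

/-- `V`-executability (Nash–Ludäscher). -/
def Exec : Finset V → FO ρ V D → Prop
  | Vs, eqVar x y => x ∈ Vs ∨ y ∈ Vs
  | _, eqConst _ _ => True
  | Vs, rel _ xs _ => xs.toFinset ⊆ Vs
  | Vs, not φ => Exec Vs φ ∧ FV φ ⊆ Vs
  | Vs, and φ ψ => Exec Vs φ ∧ Exec (Vs ∪ FV φ) ψ
  | Vs, or φ ψ => Exec Vs φ ∧ Exec Vs ψ ∧ symmDiff (FV φ) (FV ψ) ⊆ Vs
  | Vs, ex x φ => Exec (Vs \ {x}) φ

end FO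

/-- Executability of the translated formula for an io-disjoint difference:
`φ₁ ∧ ¬φ₂` is `V`-executable for `V = I(α₁) ∪ I(α₂) ∪ (O(α₂) \ O(α₁))`;
in particular `FV(φ₂) ⊆ V ∪ FV(φ₁)`. -/

theorem FO.exec_mono {ρ V D : Type} [DecidableEq V] {Vs Ws : Finset V}
    (h : Vs ⊆ Ws) : ∀ {φ : FO ρ V D}, FO.Exec Vs φ → FO.Exec Ws φ
  | .eqVar x y, hv => hv.imp (fun h' => h h') (fun h' => h h')
  | .eqConst _ _, _ => trivial
  | .rel _ _ _, hv => hv.trans h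
  | .not φ, hv => ⟨FO.exec_mono h hv.1, hv.2.trans h⟩
  | .and φ ψ, hv => ⟨FO.exec_mono h hv.1,
      FO.exec_mono (Finset.union_subset_union_left h) hv.2⟩
  | .or φ ψ, hv => ⟨FO.exec_mono h hv.1, FO.exec_mono h hv.2.1, hv.2.2.trans h⟩
  | .ex x φ, hv => FO.exec_mono (Finset.sdiff_subset_sdiff h (subset_refl _)) hv

theorem exec_difference_case {ρ V D : Type} [DecidableEq V]
    (I₁ I₂ O₁ O₂ : Finset V) (φ₁ φ₂ : FO ρ V D)
    (he1 : FO.Exec I₁ φ₁) (hfv1 : FO.FV φ₁ = I₁ ∪ O₁)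
    (he2 : FO.Exec I₂ φ₂) (hfv2 : FO.FV φ₂ = I₂ ∪ O₂)
    (hOO : O₁ ⊆ O₂) (h1 : I₁ ∩ O₁ = ∅) (h2 : I₂ ∩ O₂ = ∅) :
    FO.Exec (I₁ ∪ I₂ ∪ (O₂ \ O₁)) (FO.and φ₁ (FO.not φ₂)) ∧
      FO.FV φ₂ ⊆ (I₁ ∪ I₂ ∪ (O₂ \ O₁)) ∪ FO.FV φ₁ := by
  
  have hsub : FO.FV φ₂ ⊆ (I₁ ∪ I₂ ∪ (O₂ \ O₁)) ∪ FO.FV φ₁ := by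
    rw [hfv2, hfv1]
    intro x hx
    simp only [Finset.mem_union, Finset.mem_sdiff] at *
    rcases hx with h | h
    · tauto
    · by_cases hO1 : x ∈ O₁ <;> tauto
  refine ⟨⟨?_, ?_, hsub⟩, hsub⟩
  · exact FO.exec_mono (fun x hx => by simp [Finset.mem_union]; tauto) he1
  · exact FO.exec_mono (fun x hx => by simp [Finset.mem_union]; tauto) he2
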